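/- For every integer n ≥ 2, ∑_{i=0}^{n-2} binom(n-2, i) / binom(3n-4, n-i) = 3 / ((2n-1)(2n-3)). -/

import Mathlib

open Finset

lemma key (N j : ℕ) (h : j ≤ N) :
    (1:ℚ)/((N+1).choose (j+1)) + 1/((N+1).choose j)
      = ((N:ℚ)+2)/(((N:ℚ)+1) * (N.choose j)) := by
  have h0 : (0:ℚ) < (N.choose j : ℚ) := by exact_mod_cast Nat.choose_pos h
  have h1 : (0:ℚ) < ((N+1).choose (j+1) : ℚ) := by
    exact_mod_cast Nat.choose_pos (by omega)
  have h2 : (0:ℚ) < ((N+1).choose j : ℚ) := by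
    exact_mod_cast Nat.choose_pos (by omega)
  have hd : (0:ℚ) < ((N:ℚ)+1) * (N.choose j) := by
    apply mul_pos (by positivity) h0
  have e1 : ((N+1).choose (j+1) : ℚ) * ((j:ℚ)+1) = ((N:ℚ)+1) * (N.choose j) := by
    exact_mod_cast (Nat.add_one_mul_choose_eq N j).symm
  have e2 : ((N+1).choose j : ℚ) * ((N:ℚ)+1-(j:ℚ)) = ((N:ℚ)+1) * (N.choose j) := by
    have h3 := Nat.choose_mul_succ_eq N j
    have h4 : ((N.choose j * (N+1) : ℕ) : ℚ) = (((N+1).choose j * (N+1-j) : ℕ) : ℚ) := by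
      exact_mod_cast h3
    have hj : j ≤ N + 1 := by omega
    push_cast [hj] at h4
    linarith
  have r1 : (1:ℚ)/((N+1).choose (j+1)) = ((j:ℚ)+1)/(((N:ℚ)+1) * (N.choose j)) := by
    rw [div_eq_div_iff h1.ne' hd.ne']; linear_combination -e1
  have r2 : (1:ℚ)/((N+1).choose j) = (((N:ℚ)+1-(j:ℚ)))/(((N:ℚ)+1) * (N.choose j)) := by
    rw [div_eq_div_iff h2.ne' hd.ne']; linear_combination -e2
  rw [r1, r2, ← add_div]
  congr 1
  ring

lemma gen (a b : ℕ) (hb : 1 ≤ b) (hba : b ≤ a) : ∀ m : ℕ,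
    ∑ i ∈ range (m+1), ((m.choose i : ℚ)) / (((m+a).choose (m+b-i) : ℚ))
      = ((m:ℚ)+(a:ℚ)+1)/(((a:ℚ)+1) * (a.choose b)) := by
  intro m
  induction m with
  | zero =>
      have h0 : ((a.choose b : ℚ)) ≠ 0 := by
        exact_mod_cast (Nat.choose_pos hba).ne'
      have ha : ((a:ℚ)+1) ≠ 0 := by positivity
      simp only [Finset.sum_range_one, Nat.choose_self, Nat.cast_one, Nat.zero_add,
        Nat.cast_zero, Nat.sub_zero]
      rw [div_eq_div_iff (by simpa using h0) (by exact mul_ne_zero ha h0)]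
      ring
  | succ m ih =>
      have hidx : ∀ i, m+1+b-(i+1) = m+b-i := fun i => by omega
      have h2 : ∑ i ∈ range (m+1), ((m.choose (i+1) : ℚ)) / (((m+1+a).choose (m+b-i) : ℚ))
            + (1:ℚ) / (((m+1+a).choose (m+1+b) : ℚ))
          = ∑ i ∈ range (m+1), ((m.choose i : ℚ)) / (((m+1+a).choose (m+1+b-i) : ℚ)) := by
        rw [Finset.sum_range_succ'
          (fun i => ((m.choose i : ℚ)) / (((m+1+a).choose (m+1+b-i) : ℚ))) m]
        rw [Finset.sum_range_succ]
        simp [Nat.choose_succ_self, hidx]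
      have step1 : ∑ i ∈ range (m+1+1), (((m+1).choose i : ℚ))
            / (((m+1+a).choose (m+1+b-i) : ℚ))
          = ∑ i ∈ range (m+1), ((m.choose i : ℚ)
              * (1/(((m+1+a).choose (m+1+b-i) : ℚ)) + 1/(((m+1+a).choose (m+b-i) : ℚ)))) := by
        rw [Finset.sum_range_succ' _ (m+1)]
        simp only [hidx, Nat.choose_succ_succ, Nat.cast_add, add_div, Nat.choose_zero_right,
          Nat.cast_one, Nat.sub_zero]
        have h3 : ∀ i ∈ range (m+1), ((m.choose i : ℚ)
              * (1/(((m+1+a).choose (m+1+b-i) : ℚ)) + 1/(((m+1+a).choose (m+b-i) : ℚ))))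
            = (m.choose i : ℚ) / (((m+1+a).choose (m+1+b-i) : ℚ))
              + (m.choose i : ℚ) / (((m+1+a).choose (m+b-i) : ℚ)) := by
          intro i _; ring
        simp only [Nat.succ_eq_add_one]
        rw [Finset.sum_add_distrib, Finset.sum_congr rfl h3, Finset.sum_add_distrib, ← h2]
        ring
      rw [step1]
      have step2 : ∀ i ∈ range (m+1), ((m.choose i : ℚ)
            * (1/(((m+1+a).choose (m+1+b-i) : ℚ)) + 1/(((m+1+a).choose (m+b-i) : ℚ))))
          = (((m:ℚ)+a+2)/((m:ℚ)+a+1)) * ((m.choose i : ℚ) / (((m+a).choose (m+b-i) : ℚ))) := by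
        intro i hi
        have hiM : i ≤ m := by
          have := Finset.mem_range.mp hi; omega
        have hkey := key (m+a) (m+b-i) (by omega)
        have hN : m+1+a = (m+a)+1 := by omega
        have hj : m+1+b-i = (m+b-i)+1 := by omega
        rw [hN, hj, hkey]
        have hC : (((m+a).choose (m+b-i) : ℚ)) ≠ 0 := by
          exact_mod_cast (Nat.choose_pos (by omega)).ne'
        have hN1 : ((m+a:ℕ):ℚ)+1 ≠ 0 := by positivity
        field_simp
        push_cast; ring
      rw [Finset.sum_congr rfl step2, ← Finset.mul_sum, ih]
      have h1 : ((m:ℚ)+a+1) ≠ 0 := by positivity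
      have ha : ((a:ℚ)+1) ≠ 0 := by positivity
      have h0 : ((a.choose b : ℚ)) ≠ 0 := by
        exact_mod_cast (Nat.choose_pos hba).ne'
      field_simp
      push_cast; ring

theorem stmt2 (n : ℕ) (hn : 2 ≤ n) :
    ∑ i ∈ Finset.range (n - 1),
        ((n - 2).choose i : ℚ) / ((3 * n - 4).choose (n - i) : ℚ)
      = 3 / (((2 * n - 1 : ℕ) : ℚ) * ((2 * n - 3 : ℕ) : ℚ)) := by
  obtain ⟨m, rfl⟩ : ∃ m, n = m + 2 := ⟨n - 2, by omega⟩
  have h := gen (2*m+2) 2 (by omega) (by omega) m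
  have e1 : m + 2 - 1 = m + 1 := by omega
  have e2 : m + 2 - 2 = m := by omega
  have e3 : 3 * (m + 2) - 4 = m + (2*m+2) := by omega
  have e4 : 2 * (m + 2) - 1 = 2*m+3 := by omega
  have e5 : 2 * (m + 2) - 3 = 2*m+1 := by omega
  rw [e1, e2, e3, e4, e5, h]
  have hch : (2*m+2).choose 2 = (m+1)*(2*m+1) := by
    rw [Nat.choose_two_right]
    have e : 2*m+2-1 = 2*m+1 := by omega
    rw [e, show (2*m+2)*(2*m+1) = 2*((m+1)*(2*m+1)) from by ring]
    exact Nat.mul_div_cancel_left _ (by norm_num)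
  rw [hch]
  have h1 : ((2*m+3:ℕ):ℚ) ≠ 0 := by positivity
  have h2 : ((2*m+1:ℕ):ℚ) ≠ 0 := by positivity
  have h3 : ((m:ℚ)+1) ≠ 0 := by positivity
  push_cast
  field_simp
  ring
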